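/- For any n ≥ 2 and any disjoint planar point sets R and B with |R| = |B| = n, let E = {(a_i,b_i) : i = 1,…,n} be a max-sum bichromatic matching of R and B, and let o be the midpoint of a shortest segment of the matching (i.e., o = (a_j+b_j)/2 for an index j minimizing ‖a_j−b_j‖). Then for all i ∈ {1,…,n}, ‖a_i−o‖ + ‖b_i−o‖ ≤ √5 · ‖a_i−b_i‖. -/
import Mathlib
set_option maxHeartbeats 1000000


noncomputable section

/-- Points of the plane with the Euclidean norm. -/
abbrev Pt : Type := EuclideanSpace ℝ (Fin 2)

/-- The closed disk with diameter the segment `pq`: center `(p+q)/2`, radius `‖p-q‖/2`. -/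
def disk (p q : Pt) : Set Pt := Metric.closedBall (midpoint ℝ p q) (dist p q / 2)


/-- Total Euclidean length of the bichromatic matching that matches `p ∈ R` with `f p`. -/
def bmCost (R : Finset Pt) (f : Pt → Pt) : ℝ := ∑ p ∈ R, dist p (f p)

/-- `f` is a max-sum bichromatic matching of `R` and `B`: it is a bijection from `R` onto `B`
maximizing the total Euclidean distance of matched pairs. -/
def IsMaxSumBichromatic (R B : Finset Pt) (f : Pt → Pt) : Prop :=
  Set.BijOn f ↑R ↑B ∧ ∀ g : Pt → Pt, Set.BijOn g ↑R ↑B → bmCost R g ≤ bmCost R f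

/-- Swap exchange inequality for a max-sum bichromatic matching. -/
lemma swap_bound (R B : Finset Pt) (f : Pt → Pt) (hf : IsMaxSumBichromatic R B f)
    (p j : Pt) (hp : p ∈ R) (hj : j ∈ R) :
    dist p (f j) + dist j (f p) ≤ dist p (f p) + dist j (f j) := by
  classical
  rcases eq_or_ne p j with rfl | hpj
  · linarith [dist_nonneg (x := p) (y := f p)]
  · set σ := Equiv.swap p j with hσdef
    have hmaps : ∀ x ∈ (R : Set Pt), σ x ∈ (R : Set Pt) := by
      intro x hx
      rcases eq_or_ne x p with rfl | h1
      · simpa [hσdef, Equiv.swap_apply_left] using hj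
      rcases eq_or_ne x j with rfl | h2
      · simpa [hσdef, Equiv.swap_apply_right] using hp
      · rw [hσdef]; rw [Equiv.swap_apply_of_ne_of_ne h1 h2]; exact hx
    have hσbij : Set.BijOn (⇑σ) ↑R ↑R :=
      ⟨hmaps, (Equiv.injective σ).injOn, fun y hy =>
        ⟨σ y, hmaps y hy, by simp [hσdef]⟩⟩
    have hg : Set.BijOn (f ∘ ⇑σ) ↑R ↑B := hf.1.comp hσbij
    have hle : bmCost R (f ∘ ⇑σ) ≤ bmCost R f := hf.2 _ hg
    have hjp : j ∈ R.erase p := Finset.mem_erase.mpr ⟨hpj.symm, hj⟩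
    have hrest : ∑ x ∈ (R.erase p).erase j, dist x ((f ∘ ⇑σ) x)
        = ∑ x ∈ (R.erase p).erase j, dist x (f x) := by
      refine Finset.sum_congr rfl fun x hx => ?_
      have hx1 := Finset.mem_erase.mp hx
      have hx2 := Finset.mem_erase.mp hx1.2
      simp [hσdef, Equiv.swap_apply_of_ne_of_ne hx2.1 hx1.1]
    have e1 : bmCost R (f ∘ ⇑σ)
        = dist p (f j) + (dist j (f p) + ∑ x ∈ (R.erase p).erase j, dist x (f x)) := by
      unfold bmCost
      rw [← Finset.add_sum_erase _ _ hp, ← Finset.add_sum_erase _ _ hjp, hrest]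
      simp [hσdef, Equiv.swap_apply_left, Equiv.swap_apply_right]
    have e2 : bmCost R f
        = dist p (f p) + (dist j (f j) + ∑ x ∈ (R.erase p).erase j, dist x (f x)) := by
      unfold bmCost
      rw [← Finset.add_sum_erase _ _ hp, ← Finset.add_sum_erase _ _ hjp]
    rw [e1, e2] at hle
    linarith

/-- Taking o as the midpoint of a shortest segment of a max-sum bichromatic matching,
every pair (p, f p) satisfies ‖p-o‖ + ‖f p - o‖ ≤ √5 ‖p - f p‖. -/
theorem stmt5 (n : ℕ) (hn : 2 ≤ n) (R B : Finset Pt) (hdisj : Disjoint R B)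
    (hR : R.card = n) (hB : B.card = n) (f : Pt → Pt)
    (hf : IsMaxSumBichromatic R B f)
    (j : Pt) (hj : j ∈ R) (hjmin : ∀ p ∈ R, dist j (f j) ≤ dist p (f p)) :
    ∀ p ∈ R, dist p (midpoint ℝ j (f j)) + dist (f p) (midpoint ℝ j (f j)) ≤
      Real.sqrt 5 * dist p (f p) := by
  intro p hp
  set o : Pt := midpoint ℝ j (f j) with ho
  have hswap := swap_bound R B f hf p j hp hj
  have hmin := hjmin p hp
  set u : Pt := p - o with hu
  set v : Pt := f p - o with hv
  have h2o : o + o = j + f j := by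
    rw [ho, midpoint_add_self]
  have huv_add : u + v = (p - f j) + (f p - j) := by
    rw [hu, hv]
    have : p - o + (f p - o) = p + f p - (o + o) := by abel
    rw [this, h2o]; abel
  have hnadd : ‖u + v‖ ≤ dist p (f j) + dist j (f p) := by
    rw [huv_add]
    calc ‖(p - f j) + (f p - j)‖ ≤ ‖p - f j‖ + ‖f p - j‖ := norm_add_le _ _
      _ = dist p (f j) + dist j (f p) := by
        rw [dist_eq_norm, dist_eq_norm]
        rw [show ‖f p - j‖ = ‖j - f p‖ from (norm_sub_rev _ _)]
  have huv_sub : u - v = p - f p := by rw [hu, hv]; abel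
  have hnsub : ‖u - v‖ = dist p (f p) := by rw [huv_sub, dist_eq_norm]
  have hpar : ‖u + v‖ ^ 2 + ‖u - v‖ ^ 2 = 2 * (‖u‖ ^ 2 + ‖v‖ ^ 2) := by
    have := parallelogram_law_with_norm ℝ u v
    nlinarith [this]
  have ha : dist p o = ‖u‖ := by rw [hu, dist_eq_norm]
  have hb : dist (f p) o = ‖v‖ := by rw [hv, dist_eq_norm]
  set d : ℝ := dist p (f p) with hd
  have hd0 : 0 ≤ d := dist_nonneg
  have hw2 : ‖u + v‖ ≤ 2 * d := by
    have h1 : dist p (f j) + dist j (f p) ≤ d + dist j (f j) := hswap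
    linarith [hnadd]
  have hw0 : (0:ℝ) ≤ ‖u + v‖ := norm_nonneg _
  have hab2 : (‖u‖ + ‖v‖) ^ 2 ≤ 5 * d ^ 2 := by
    have hsq : ‖u + v‖ ^ 2 ≤ 4 * d ^ 2 := by nlinarith
    nlinarith [sq_nonneg (‖u‖ - ‖v‖), hpar, hnsub]
  have habnn : (0:ℝ) ≤ ‖u‖ + ‖v‖ := by positivity
  rw [ha, hb]
  have : ‖u‖ + ‖v‖ = Real.sqrt ((‖u‖ + ‖v‖) ^ 2) := (Real.sqrt_sq habnn).symm
  rw [this]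
  calc Real.sqrt ((‖u‖ + ‖v‖) ^ 2) ≤ Real.sqrt (5 * d ^ 2) := Real.sqrt_le_sqrt hab2
    _ = Real.sqrt 5 * d := by
      rw [Real.sqrt_mul (by norm_num : (0:ℝ) ≤ 5), Real.sqrt_sq hd0]
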